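/- Fix a ∈ (0, 1/2]. For λ > 0 define, for r ∈ (0,1), G_λ(r) = 1/2 − log(e^{R(a)/2}/r') + [r²·sin(πa) − 2(1−a)·(E_a(r) − r'²·K_a(r))] / (2λ·r²·r'²·sin(πa)), where r' = √(1−r²). If λ ≥ a(1−a), then G_λ is strictly decreasing on (0, 1). -/

import Mathlib

open Real Set Filter Topology

/-- The digamma function `ψ(x) = Γ'(x)/Γ(x)`. -/
noncomputable def digamma (x : ℝ) : ℝ := deriv Real.Gamma x / Real.Gamma x

/-- The Ramanujan constant function `R(x) = -2γ - ψ(x) - ψ(1-x)`. -/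
noncomputable def ramanujanR (x : ℝ) : ℝ :=
  -2 * Real.eulerMascheroniConstant - digamma x - digamma (1 - x)

/-- The Riemann zeta function as a real series `ζ(s) = Σ_{n=1}^∞ n^{-s}`. -/
noncomputable def zetaR (s : ℝ) : ℝ := ∑' n : ℕ, 1 / ((n : ℝ) + 1) ^ s

/-- The generalized elliptic integral of the first kind
`K_a(r) = (π/2) Σ_{n=0}^∞ ((a)_n (1-a)_n / (n!)^2) r^(2n)`. -/
noncomputable def Ka (a r : ℝ) : ℝ :=
  Real.pi / 2 * ∑' n : ℕ,
    (Polynomial.eval a (ascPochhammer ℝ n) * Polynomial.eval (1 - a) (ascPochhammer ℝ n)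
      / (Nat.factorial n : ℝ) ^ 2) * r ^ (2 * n)

/-- The generalized elliptic integral of the second kind
`E_a(r) = (π/2) Σ_{n=0}^∞ ((a-1)_n (1-a)_n / (n!)^2) r^(2n)`. -/
noncomputable def Ea (a r : ℝ) : ℝ :=
  Real.pi / 2 * ∑' n : ℕ,
    (Polynomial.eval (a - 1) (ascPochhammer ℝ n) * Polynomial.eval (1 - a) (ascPochhammer ℝ n)
      / (Nat.factorial n : ℝ) ^ 2) * r ^ (2 * n)


noncomputable def dd (a : ℝ) (n : ℕ) : ℝ :=
  Polynomial.eval a (ascPochhammer ℝ n) * Polynomial.eval (1 - a) (ascPochhammer ℝ n)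
    / (Nat.factorial n : ℝ) ^ 2

noncomputable def coefE (a : ℝ) (n : ℕ) : ℝ :=
  Polynomial.eval (a - 1) (ascPochhammer ℝ n) * Polynomial.eval (1 - a) (ascPochhammer ℝ n)
    / (Nat.factorial n : ℝ) ^ 2

noncomputable def ee (a : ℝ) (n : ℕ) : ℝ := n * dd a n

noncomputable def LL (a : ℝ) : ℝ := (Real.Gamma a * Real.Gamma (1 - a))⁻¹

noncomputable def gam (a : ℝ) (k : ℕ) : ℝ := 1 - ee a (k + 1) / LL a

lemma dd_zero (a : ℝ) : dd a 0 = 1 := by simp [dd]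

lemma dd_one (a : ℝ) : dd a 1 = a * (1 - a) := by
  simp [dd, ascPochhammer_one]

lemma dd_pos {a : ℝ} (ha0 : 0 < a) (ha1 : a < 1) (n : ℕ) : 0 < dd a n := by
  apply div_pos
  · exact mul_pos (ascPochhammer_pos n a ha0) (ascPochhammer_pos n (1 - a) (by linarith))
  · positivity

lemma factorial_sq_succ (n : ℕ) :
    ((Nat.factorial (n+1) : ℝ))^2 = ((n:ℝ)+1)^2 * (Nat.factorial n : ℝ)^2 := by
  rw [Nat.factorial_succ]; push_cast; ring

lemma dd_succ (a : ℝ) (n : ℕ) :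
    dd a (n+1) = dd a n * ((a + n) * ((1 - a) + n) / ((n:ℝ)+1)^2) := by
  have hf : (Nat.factorial n : ℝ) ≠ 0 := Nat.cast_ne_zero.mpr (Nat.factorial_ne_zero n)
  have hn : ((n:ℝ)+1) ≠ 0 := by positivity
  rw [dd, dd, ascPochhammer_succ_eval, ascPochhammer_succ_eval, factorial_sq_succ]
  field_simp

lemma ee_succ_sub (a : ℝ) (n : ℕ) :
    ee a (n+1) = ee a n + a * (1 - a) * dd a n / ((n:ℝ)+1) := by
  have hn : ((n:ℝ)+1) ≠ 0 := by positivity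
  rw [ee, ee, dd_succ]
  push_cast
  field_simp
  ring

lemma ee_mono {a : ℝ} (ha0 : 0 < a) (ha1 : a < 1) : StrictMono (ee a) := by
  apply strictMono_nat_of_lt_succ
  intro n
  rw [ee_succ_sub]
  have : 0 < a * (1 - a) * dd a n / ((n:ℝ)+1) := by
    apply div_pos
    · exact mul_pos (mul_pos ha0 (by linarith)) (dd_pos ha0 ha1 n)
    · positivity
  linarith

lemma ee_one (a : ℝ) : ee a 1 = a * (1 - a) := by
  rw [ee, dd_one]; push_cast; ring

lemma poch_prod (a : ℝ) (n : ℕ) :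
    Polynomial.eval a (ascPochhammer ℝ (n+1)) = ∏ j ∈ Finset.range (n+1), (a + j) := by
  induction n with
  | zero => simp [ascPochhammer_one]
  | succ n ih =>
    rw [ascPochhammer_succ_eval, ih,
      Finset.prod_range_succ (f := fun j : ℕ => a + (j:ℝ)) (n+1)]

lemma gammaSeq_pos {a : ℝ} (ha : 0 < a) {n : ℕ} (hn : 1 ≤ n) : 0 < Real.GammaSeq a n := by
  unfold Real.GammaSeq
  apply div_pos
  · apply mul_pos
    · exact Real.rpow_pos_of_pos (by exact_mod_cast hn) a
    · exact_mod_cast Nat.factorial_pos n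
  · apply Finset.prod_pos
    intro j _
    have : (0:ℝ) ≤ j := Nat.cast_nonneg j
    linarith

lemma tendsto_nat_div_succ : Tendsto (fun n : ℕ => (n : ℝ) / ((n:ℝ)+1)) atTop (𝓝 1) := by
  have h := tendsto_one_div_add_atTop_nhds_zero_nat (𝕜 := ℝ)
  have he : (fun n : ℕ => (n : ℝ) / ((n:ℝ)+1)) = fun n : ℕ => 1 - 1/((n:ℝ)+1) := by
    funext n
    have : ((n:ℝ)+1) ≠ 0 := by positivity
    field_simp
    ring
  rw [he]
  simpa using (tendsto_const_nhds.sub h)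

lemma ee_gammaSeq {a : ℝ} (ha0 : 0 < a) (ha1 : a < 1) {n : ℕ} (hn : 1 ≤ n) :
    ee a (n+1) = ((n:ℝ) / ((n:ℝ)+1)) * (Real.GammaSeq a n * Real.GammaSeq (1-a) n)⁻¹ := by
  have hga := gammaSeq_pos ha0 hn
  have hgb := gammaSeq_pos (show (0:ℝ) < 1 - a by linarith) hn
  have hnr : (0:ℝ) < n := by exact_mod_cast hn
  have hfact : (0:ℝ) < Nat.factorial n := by exact_mod_cast Nat.factorial_pos n
  have hprod_a : (0:ℝ) < ∏ j ∈ Finset.range (n+1), (a + j) := by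
    apply Finset.prod_pos; intro j _; have : (0:ℝ) ≤ j := Nat.cast_nonneg j; linarith
  have hprod_b : (0:ℝ) < ∏ j ∈ Finset.range (n+1), ((1-a) + j) := by
    apply Finset.prod_pos; intro j _; have : (0:ℝ) ≤ j := Nat.cast_nonneg j; linarith
  have hrpow : (n:ℝ) ^ a * (n:ℝ) ^ (1-a) = n := by
    rw [← Real.rpow_add hnr]; norm_num
  have key : ee a (n+1) * (Real.GammaSeq a n * Real.GammaSeq (1-a) n) = (n:ℝ) / ((n:ℝ)+1) := by
    unfold Real.GammaSeq
    rw [ee, dd, poch_prod, poch_prod, div_mul_div_comm,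
      show (n:ℝ)^a * ↑(Nat.factorial n) * ((n:ℝ)^(1-a) * ↑(Nat.factorial n))
        = (n:ℝ) * (↑(Nat.factorial n) * ↑(Nat.factorial n)) by
          rw [show (n:ℝ)^a * ↑(Nat.factorial n) * ((n:ℝ)^(1-a) * ↑(Nat.factorial n))
            = ((n:ℝ)^a * (n:ℝ)^(1-a)) * (↑(Nat.factorial n) * ↑(Nat.factorial n)) from by ring,
            hrpow],
      factorial_sq_succ]
    field_simp
    push_cast
    ring
  have hne : Real.GammaSeq a n * Real.GammaSeq (1-a) n ≠ 0 := (mul_pos hga hgb).ne'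
  field_simp at key ⊢
  linarith [key]

lemma LL_pos {a : ℝ} (ha0 : 0 < a) (ha1 : a < 1) : 0 < LL a := by
  rw [LL]
  exact inv_pos.mpr (mul_pos (Real.Gamma_pos_of_pos ha0)
    (Real.Gamma_pos_of_pos (by linarith)))

lemma ee_tendsto {a : ℝ} (ha0 : 0 < a) (ha1 : a < 1) :
    Tendsto (ee a) atTop (𝓝 (LL a)) := by
  have hG : Tendsto (fun n : ℕ => Real.GammaSeq a n * Real.GammaSeq (1-a) n) atTop
      (𝓝 (Real.Gamma a * Real.Gamma (1-a))) :=
    (Real.GammaSeq_tendsto_Gamma a).mul (Real.GammaSeq_tendsto_Gamma (1-a))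
  have hGne : Real.Gamma a * Real.Gamma (1-a) ≠ 0 :=
    (mul_pos (Real.Gamma_pos_of_pos ha0) (Real.Gamma_pos_of_pos (by linarith))).ne'
  have hinv : Tendsto (fun n : ℕ => (Real.GammaSeq a n * Real.GammaSeq (1-a) n)⁻¹) atTop
      (𝓝 (LL a)) := hG.inv₀ hGne
  have hmul : Tendsto (fun n : ℕ => ((n:ℝ)/((n:ℝ)+1)) *
      (Real.GammaSeq a n * Real.GammaSeq (1-a) n)⁻¹) atTop (𝓝 (LL a)) := by
    have := tendsto_nat_div_succ.mul hinv
    simpa using this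
  have heq : ∀ᶠ n : ℕ in atTop, ((n:ℝ)/((n:ℝ)+1)) *
      (Real.GammaSeq a n * Real.GammaSeq (1-a) n)⁻¹ = ee a (n+1) := by
    filter_upwards [eventually_ge_atTop (1:ℕ)] with n hn
    exact (ee_gammaSeq ha0 ha1 hn).symm
  have h2 : Tendsto (fun n : ℕ => ee a (n+1)) atTop (𝓝 (LL a)) :=
    hmul.congr' heq
  exact (tendsto_add_atTop_iff_nat 1).mp h2

lemma ee_le {a : ℝ} (ha0 : 0 < a) (ha1 : a < 1) (n : ℕ) : ee a n ≤ LL a :=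
  ((ee_mono ha0 ha1).monotone).ge_of_tendsto (ee_tendsto ha0 ha1) n

lemma ee_tail {a : ℝ} (ha0 : 0 < a) (ha1 : a < 1) {j : ℕ} (hj : 1 ≤ j) :
    LL a - ee a j ≤ LL a * (a * (1-a)) / j := by
  set q := a * (1-a) with hq
  have hL := LL_pos ha0 ha1
  have hqpos : 0 < q := mul_pos ha0 (by linarith)
  -- for all M ≥ j : ee a M ≤ ee a j + LL a * q * (1/j - 1/M)
  have main : ∀ M, j ≤ M → ee a M ≤ ee a j + LL a * q * (1/(j:ℝ) - 1/(M:ℝ)) := by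
    intro M hM
    induction M with
    | zero => omega
    | succ M ih =>
      rcases Nat.lt_or_ge j (M+1) with h | h
      · have hMj : j ≤ M := by omega
        have hM1 : 1 ≤ M := le_trans hj hMj
        have hMr : (1:ℝ) ≤ (M:ℝ) := by exact_mod_cast hM1
        have ihM := ih hMj
        have hstep : ee a (M+1) = ee a M + q * dd a M / ((M:ℝ)+1) := by
          rw [ee_succ_sub]
        have hdd : dd a M = ee a M / M := by
          rw [ee]; field_simp
        have heeM : ee a M ≤ LL a := ee_le ha0 ha1 M
        have hMpos : (0:ℝ) < M := by linarith
        have hbound : q * dd a M / ((M:ℝ)+1) ≤ LL a * q * (1/(M:ℝ) - 1/((M:ℝ)+1)) := by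
          rw [hdd, show (1/(M:ℝ) - 1/((M:ℝ)+1)) = 1/((M:ℝ)*((M:ℝ)+1)) from by
              rw [div_sub_div _ _ (by positivity : (M:ℝ) ≠ 0) (by positivity : ((M:ℝ)+1) ≠ 0)]
              norm_num,
            show q * (ee a M/(M:ℝ))/((M:ℝ)+1) = q * ee a M / ((M:ℝ)*((M:ℝ)+1)) from by
              field_simp,
            show LL a * q * (1/((M:ℝ)*((M:ℝ)+1))) = q * LL a / ((M:ℝ)*((M:ℝ)+1)) from by ring]
          gcongr
        have e1 : LL a * q * (1/(j:ℝ) - 1/(M:ℝ))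
            = LL a * q * (1/(j:ℝ)) - LL a * q * (1/(M:ℝ)) := by ring
        have e2 : LL a * q * (1/(M:ℝ) - 1/((M:ℝ)+1))
            = LL a * q * (1/(M:ℝ)) - LL a * q * (1/((M:ℝ)+1)) := by ring
        have e3 : ee a j + LL a * q * (1/(j:ℝ) - 1/((M:ℝ)+1))
            = ee a j + LL a * q * (1/(j:ℝ)) - LL a * q * (1/((M:ℝ)+1)) := by ring
        push_cast
        rw [e3] at *
        push_cast at *
        linarith [ihM, hbound, hstep, e1, e2]
      · have : j = M + 1 := by omega
        subst this
        simp
  have hev : ∀ᶠ M in atTop, ee a M ≤ ee a j + LL a * q * (1/(j:ℝ)) := by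
    filter_upwards [eventually_ge_atTop j] with M hM
    have h1 := main M hM
    have h2 : LL a * q * (1/(j:ℝ) - 1/(M:ℝ)) ≤ LL a * q * (1/(j:ℝ)) := by
      have : (0:ℝ) ≤ 1/(M:ℝ) := by positivity
      nlinarith [mul_pos hL hqpos]
    linarith
  have hlim := le_of_tendsto (ee_tendsto ha0 ha1) hev
  have : LL a * q / (j:ℝ) = LL a * q * (1/(j:ℝ)) := by ring
  linarith [hlim, this.ge, this.le]

lemma ee_nonneg {a : ℝ} (ha0 : 0 < a) (ha1 : a < 1) (n : ℕ) : 0 ≤ ee a n := by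
  rw [ee]
  exact mul_nonneg (Nat.cast_nonneg n) (dd_pos ha0 ha1 n).le

lemma gam_nonneg {a : ℝ} (ha0 : 0 < a) (ha1 : a < 1) (k : ℕ) : 0 ≤ gam a k := by
  rw [gam, sub_nonneg]
  exact div_le_one_of_le₀ (ee_le ha0 ha1 (k+1)) (LL_pos ha0 ha1).le

lemma gam_le_one {a : ℝ} (ha0 : 0 < a) (ha1 : a < 1) (k : ℕ) : gam a k ≤ 1 := by
  rw [gam]
  have h1 := ee_nonneg ha0 ha1 (k+1)
  have h2 := LL_pos ha0 ha1
  have : 0 ≤ ee a (k+1) / LL a := div_nonneg h1 h2.le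
  linarith

lemma gam_bound {a : ℝ} (ha0 : 0 < a) (ha1 : a < 1) (k : ℕ) :
    gam a (k+1) ≤ a * (1-a) / ((k:ℝ)+2) := by
  have hL := LL_pos ha0 ha1
  have htail := ee_tail ha0 ha1 (show 1 ≤ k+2 by omega)
  rw [gam]
  have hcast : ((k+2 : ℕ) : ℝ) = (k:ℝ)+2 := by push_cast; ring
  rw [hcast] at htail
  rw [show (1:ℝ) - ee a (k+1+1) / LL a = (LL a - ee a (k+2)) / LL a from by
    field_simp]
  calc (LL a - ee a (k+2)) / LL a ≤ (LL a * (a*(1-a)) / ((k:ℝ)+2)) / LL a := by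
        gcongr
      _ = a * (1-a) / ((k:ℝ)+2) := by field_simp

lemma poch_abs_le {x : ℝ} (hx : |x| ≤ 1) (n : ℕ) :
    |Polynomial.eval x (ascPochhammer ℝ n)| ≤ (Nat.factorial n : ℝ) := by
  induction n with
  | zero => simp
  | succ n ih =>
    rw [ascPochhammer_succ_eval, abs_mul, Nat.factorial_succ]
    push_cast
    have h1 : |x + n| ≤ (n:ℝ) + 1 := by
      calc |x + (n:ℝ)| ≤ |x| + |(n:ℝ)| := abs_add_le _ _
        _ ≤ 1 + (n:ℝ) := by
            have hn : |(n:ℝ)| = (n:ℝ) := abs_of_nonneg (Nat.cast_nonneg n)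
            linarith
        _ = (n:ℝ) + 1 := by ring
    calc |Polynomial.eval x (ascPochhammer ℝ n)| * |x + n|
        ≤ (Nat.factorial n : ℝ) * ((n:ℝ)+1) :=
          mul_le_mul ih h1 (abs_nonneg _) (by positivity)
      _ = ((n:ℝ)+1) * (Nat.factorial n : ℝ) := by ring

lemma dd_le_one {a : ℝ} (ha0 : 0 < a) (ha1 : a < 1) (n : ℕ) : dd a n ≤ 1 := by
  have hfac : (0:ℝ) < (Nat.factorial n : ℝ) := by exact_mod_cast Nat.factorial_pos n
  have h1 := poch_abs_le (show |a| ≤ 1 from by rw [abs_of_pos ha0]; linarith) n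
  have h2 := poch_abs_le (show |1-a| ≤ 1 from by rw [abs_of_pos (by linarith)]; linarith) n
  rw [dd, div_le_one (by positivity)]
  calc Polynomial.eval a (ascPochhammer ℝ n) * Polynomial.eval (1-a) (ascPochhammer ℝ n)
      ≤ |Polynomial.eval a (ascPochhammer ℝ n) * Polynomial.eval (1-a) (ascPochhammer ℝ n)| :=
        le_abs_self _
    _ = |Polynomial.eval a (ascPochhammer ℝ n)| * |Polynomial.eval (1-a) (ascPochhammer ℝ n)| :=
        abs_mul _ _
    _ ≤ (Nat.factorial n : ℝ) * (Nat.factorial n : ℝ) :=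
        mul_le_mul h1 h2 (abs_nonneg _) hfac.le
    _ = (Nat.factorial n : ℝ)^2 := by ring

lemma coefE_abs_le_one {a : ℝ} (ha0 : 0 < a) (ha1 : a < 1) (n : ℕ) : |coefE a n| ≤ 1 := by
  have hfac : (0:ℝ) < (Nat.factorial n : ℝ) := by exact_mod_cast Nat.factorial_pos n
  have h1 := poch_abs_le (show |a-1| ≤ 1 from by rw [abs_of_nonpos (by linarith)]; linarith) n
  have h2 := poch_abs_le (show |1-a| ≤ 1 from by rw [abs_of_pos (by linarith)]; linarith) n
  rw [coefE, abs_div, abs_mul, div_le_one (by positivity)]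
  calc |Polynomial.eval (a-1) (ascPochhammer ℝ n)| * |Polynomial.eval (1-a) (ascPochhammer ℝ n)|
      ≤ (Nat.factorial n : ℝ) * (Nat.factorial n : ℝ) := mul_le_mul h1 h2 (abs_nonneg _) hfac.le
    _ ≤ |(Nat.factorial n : ℝ)^2| := by rw [abs_of_nonneg (by positivity)]; ring_nf; exact le_refl _

lemma poch_succ_left (x : ℝ) (n : ℕ) :
    Polynomial.eval x (ascPochhammer ℝ (n+1)) = x * Polynomial.eval (x+1) (ascPochhammer ℝ n) := by
  induction n with
  | zero => simp [ascPochhammer_one]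
  | succ n ih =>
    rw [ascPochhammer_succ_eval, ih, ascPochhammer_succ_eval]
    push_cast
    ring

lemma coefE_zero (a : ℝ) : coefE a 0 = 1 := by simp [coefE]

lemma lemC (a : ℝ) (n : ℕ) :
    coefE a (n+1) - dd a (n+1) + dd a n = a / ((n:ℝ)+1) * dd a n := by
  have hf : (Nat.factorial n : ℝ) ≠ 0 := Nat.cast_ne_zero.mpr (Nat.factorial_ne_zero n)
  have hn1 : ((n:ℝ)+1) ≠ 0 := by positivity
  rw [coefE, dd, dd, poch_succ_left (a-1) n,
    show (a:ℝ) - 1 + 1 = a from by ring,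
    ascPochhammer_succ_eval n a,
    ascPochhammer_succ_eval n (1-a),
    factorial_sq_succ]
  field_simp
  ring

section series
variable {a t : ℝ}

lemma summable_ddt (ha0 : 0 < a) (ha1 : a < 1) (ht0 : 0 ≤ t) (ht1 : t < 1) :
    Summable (fun n : ℕ => dd a n * t^n) := by
  apply Summable.of_nonneg_of_le
    (fun n => mul_nonneg (dd_pos ha0 ha1 n).le (pow_nonneg ht0 n))
    (fun n => ?_) (summable_geometric_of_lt_one ht0 ht1)
  calc dd a n * t^n ≤ 1 * t^n := by
        exact mul_le_mul_of_nonneg_right (dd_le_one ha0 ha1 n) (pow_nonneg ht0 n)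
    _ = t^n := one_mul _

lemma summable_ddt' (ha0 : 0 < a) (ha1 : a < 1) (ht0 : 0 ≤ t) (ht1 : t < 1) :
    Summable (fun n : ℕ => dd a n / ((n:ℝ)+1) * t^n) := by
  apply Summable.of_nonneg_of_le
    (fun n => mul_nonneg (div_nonneg (dd_pos ha0 ha1 n).le (by positivity)) (pow_nonneg ht0 n))
    (fun n => ?_) (summable_ddt ha0 ha1 ht0 ht1)
  apply mul_le_mul_of_nonneg_right _ (pow_nonneg ht0 n)
  apply div_le_self (dd_pos ha0 ha1 n).le
  have : (0:ℝ) ≤ n := Nat.cast_nonneg n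
  linarith

lemma summable_Et (ha0 : 0 < a) (ha1 : a < 1) (ht0 : 0 ≤ t) (ht1 : t < 1) :
    Summable (fun n : ℕ => coefE a n * t^n) := by
  apply Summable.of_abs
  apply Summable.of_nonneg_of_le (fun n => abs_nonneg _)
    (fun n => ?_) (summable_geometric_of_lt_one ht0 ht1)
  rw [abs_mul, abs_pow, abs_of_nonneg ht0]
  calc |coefE a n| * t^n ≤ 1 * t^n :=
        mul_le_mul_of_nonneg_right (coefE_abs_le_one ha0 ha1 n) (pow_nonneg ht0 n)
    _ = t^n := one_mul _

lemma summable_gamt (ha0 : 0 < a) (ha1 : a < 1) (ht0 : 0 ≤ t) (ht1 : t < 1) :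
    Summable (fun k : ℕ => gam a k * t^k) := by
  apply Summable.of_nonneg_of_le
    (fun k => mul_nonneg (gam_nonneg ha0 ha1 k) (pow_nonneg ht0 k))
    (fun k => ?_) (summable_geometric_of_lt_one ht0 ht1)
  calc gam a k * t^k ≤ 1 * t^k :=
        mul_le_mul_of_nonneg_right (gam_le_one ha0 ha1 k) (pow_nonneg ht0 k)
    _ = t^k := one_mul _

lemma claimA (ha0 : 0 < a) (ha1 : a < 1) (ht0 : 0 ≤ t) (ht1 : t < 1) :
    (∑' n : ℕ, coefE a n * t^n)
      = (∑' n : ℕ, dd a n * t^n) - t * (∑' n : ℕ, dd a n * t^n)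
        + a * t * (∑' n : ℕ, dd a n / ((n:ℝ)+1) * t^n) := by
  set SK := ∑' n : ℕ, dd a n * t^n with hSK
  set SE := ∑' n : ℕ, coefE a n * t^n with hSE
  set Φ := ∑' n : ℕ, dd a n / ((n:ℝ)+1) * t^n with hΦdef
  have hK : HasSum (fun n : ℕ => dd a n * t^n) SK := (summable_ddt ha0 ha1 ht0 ht1).hasSum
  have hE : HasSum (fun n : ℕ => coefE a n * t^n) SE := (summable_Et ha0 ha1 ht0 ht1).hasSum
  have hΦ : HasSum (fun n : ℕ => dd a n / ((n:ℝ)+1) * t^n) Φ :=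
    (summable_ddt' ha0 ha1 ht0 ht1).hasSum
  -- shifted K series
  set g : ℕ → ℝ := fun n => if n = 0 then 0 else dd a (n-1) * t^n with hgdef
  have h1 : HasSum (fun n : ℕ => g (n+1)) (t * SK) := by
    have h := hK.mul_left t
    have he : (fun n : ℕ => t * (dd a n * t^n)) = fun n : ℕ => g (n+1) := by
      funext n
      simp only [hgdef, Nat.add_sub_cancel, if_neg (Nat.succ_ne_zero n)]
      rw [pow_succ]
      ring
    rwa [he] at h
  have hg : HasSum g (t * SK) := by
    have h2 := (hasSum_nat_add_iff (f := g) 1).mp h1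
    simpa [hgdef] using h2
  have hcomb : HasSum (fun n : ℕ => coefE a n * t^n - dd a n * t^n + g n)
      (SE - SK + t * SK) := (hE.sub hK).add hg
  -- identify with shifted W series
  set W : ℕ → ℝ := fun n => if n = 0 then 0 else a / (n:ℝ) * dd a (n-1) * t^n with hWdef
  have hterm : (fun n : ℕ => coefE a n * t^n - dd a n * t^n + g n) = W := by
    funext n
    cases n with
    | zero => simp [hgdef, hWdef, coefE_zero, dd_zero]
    | succ n =>
      simp only [hgdef, hWdef, Nat.add_sub_cancel, if_neg (Nat.succ_ne_zero n)]
      have hcast : ((n+1 : ℕ) : ℝ) = (n:ℝ)+1 := by push_cast; ring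
      rw [hcast]
      linear_combination (t^(n+1)) * lemC a n
  rw [hterm] at hcomb
  have hW' : HasSum (fun n : ℕ => W (n+1)) (SE - SK + t * SK) := by
    apply (hasSum_nat_add_iff (f := W) 1).mpr
    simpa [hWdef] using hcomb
  have hW2 : HasSum (fun n : ℕ => a / ((n:ℝ)+1) * dd a n * t^(n+1)) (SE - SK + t * SK) := by
    have he : (fun n : ℕ => W (n+1)) = fun n : ℕ => a / ((n:ℝ)+1) * dd a n * t^(n+1) := by
      funext n
      simp only [hWdef, Nat.add_sub_cancel, if_neg (Nat.succ_ne_zero n)]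
      norm_num
    rwa [he] at hW'
  have hW3 : HasSum (fun n : ℕ => a / ((n:ℝ)+1) * dd a n * t^(n+1)) (a * t * Φ) := by
    have h := hΦ.mul_left (a * t)
    have he : (fun n : ℕ => a * t * (dd a n / ((n:ℝ)+1) * t^n))
        = fun n : ℕ => a / ((n:ℝ)+1) * dd a n * t^(n+1) := by
      funext n
      rw [pow_succ]
      ring
    rwa [he] at h
  have := hW2.unique hW3
  linarith
end series

lemma claimB {a t : ℝ} (ha0 : 0 < a) (ha1 : a < 1) (ht0 : 0 ≤ t) (ht1 : t < 1) :
    (1 - t) * (∑' k : ℕ, gam a k * t^k)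
      = 1 - (a * (1-a) / LL a) * (∑' n : ℕ, dd a n / ((n:ℝ)+1) * t^n) := by
  have hL := LL_pos ha0 ha1
  set Sγ := ∑' k : ℕ, gam a k * t^k with hSg
  set Φ := ∑' n : ℕ, dd a n / ((n:ℝ)+1) * t^n with hΦdef
  have hγ : HasSum (fun k : ℕ => gam a k * t^k) Sγ := (summable_gamt ha0 ha1 ht0 ht1).hasSum
  have hΦ : HasSum (fun n : ℕ => dd a n / ((n:ℝ)+1) * t^n) Φ :=
    (summable_ddt' ha0 ha1 ht0 ht1).hasSum
  set g : ℕ → ℝ := fun k => if k = 0 then 0 else gam a (k-1) * t^k with hgdef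
  have h1 : HasSum (fun k : ℕ => g (k+1)) (t * Sγ) := by
    have h := hγ.mul_left t
    have he : (fun k : ℕ => t * (gam a k * t^k)) = fun k : ℕ => g (k+1) := by
      funext k
      simp only [hgdef, Nat.add_sub_cancel, if_neg (Nat.succ_ne_zero k)]
      rw [pow_succ]; ring
    rwa [he] at h
  have hg : HasSum g (t * Sγ) := by
    have h2 := (hasSum_nat_add_iff (f := g) 1).mp h1
    simpa [hgdef] using h2
  have hsub : HasSum (fun k : ℕ => gam a k * t^k - g k) (Sγ - t * Sγ) := hγ.sub hg
  have hterm : (fun k : ℕ => gam a k * t^k - g k)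
      = fun k : ℕ => (if k = 0 then (1:ℝ) else 0)
          - (a * (1-a) / LL a) * (dd a k / ((k:ℝ)+1) * t^k) := by
    funext k
    cases k with
    | zero =>
      simp only [hgdef, if_pos rfl, pow_zero, Nat.cast_zero]
      rw [gam, ee_one, dd_zero]
      field_simp
      rw [if_pos trivial]; ring
    | succ k =>
      simp only [hgdef, Nat.add_sub_cancel, if_neg (Nat.succ_ne_zero k)]
      have hrec := ee_succ_sub a (k+1)
      have : gam a (k+1) - gam a k = -(a * (1-a) * dd a (k+1) / ((k:ℝ)+2)) / LL a := by
        rw [gam, gam]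
        rw [show ee a (k+1+1) = ee a (k+1) + a * (1-a) * dd a (k+1) / (((k+1):ℕ)+1) from hrec]
        push_cast
        ring_nf
      have hcast : ((k+1 : ℕ) : ℝ) = (k:ℝ)+1 := by push_cast; ring
      rw [hcast]
      have expand : gam a (k+1) * t^(k+1) - gam a k * t^(k+1)
          = (gam a (k+1) - gam a k) * t^(k+1) := by ring
      rw [expand, this]
      field_simp
      ring
  rw [hterm] at hsub
  have hone : HasSum (fun k : ℕ => if k = 0 then (1:ℝ) else 0) 1 := by
    simpa using hasSum_ite_eq (0:ℕ) (1:ℝ)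
  have hrhs : HasSum (fun k : ℕ => (if k = 0 then (1:ℝ) else 0)
      - (a * (1-a) / LL a) * (dd a k / ((k:ℝ)+1) * t^k))
      (1 - (a * (1-a) / LL a) * Φ) := hone.sub (hΦ.mul_left _)
  have := hsub.unique hrhs
  linarith

lemma LL_eq {a : ℝ} (ha0 : 0 < a) (ha1 : a < 1) : Real.sin (Real.pi * a) = Real.pi * LL a := by
  have hs : 0 < Real.sin (Real.pi * a) := by
    apply Real.sin_pos_of_pos_of_lt_pi
    · positivity
    · nlinarith [Real.pi_pos]
  have h := Real.Gamma_mul_Gamma_one_sub a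
  rw [LL, h]
  field_simp

lemma value_repr {a lam : ℝ} (ha0 : 0 < a) (ha1 : a < 1) (hlam : 0 < lam) {r : ℝ}
    (hr : r ∈ Set.Ioo (0:ℝ) 1) :
    HasSum (fun k : ℕ => (gam a (k+1)/(2*lam) - 1/(2*((k:ℝ)+1))) * (r^2)^(k+1))
      ((1/2 - Real.log (Real.exp (ramanujanR a / 2) / Real.sqrt (1 - r^2))
        + (r^2 * Real.sin (Real.pi * a)
            - 2 * (1 - a) * (Ea a r - (Real.sqrt (1 - r^2))^2 * Ka a r))
          / (2 * lam * r^2 * (Real.sqrt (1 - r^2))^2 * Real.sin (Real.pi * a)))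
        - (1/2 - ramanujanR a / 2 + gam a 0 / (2*lam))) := by
  obtain ⟨hr0, hr1⟩ := hr
  have ht0 : (0:ℝ) < r^2 := by positivity
  have ht1 : r^2 < 1 := by nlinarith
  have h1t : (0:ℝ) < 1 - r^2 := by linarith
  have hsq : (Real.sqrt (1 - r^2))^2 = 1 - r^2 := Real.sq_sqrt h1t.le
  have hL := LL_pos ha0 ha1
  have hsin : Real.sin (Real.pi * a) = Real.pi * LL a := LL_eq ha0 ha1
  have hπ := Real.pi_pos
  set t := r^2 with htdef
  set SK := ∑' n : ℕ, dd a n * t^n with hSK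
  set SE := ∑' n : ℕ, coefE a n * t^n with hSE
  set Φ := ∑' n : ℕ, dd a n / ((n:ℝ)+1) * t^n with hΦdef
  set Sγ := ∑' k : ℕ, gam a k * t^k with hSg
  -- express Ka and Ea
  have hKa : Ka a r = Real.pi/2 * SK := by
    rw [Ka, hSK]
    congr 1
    exact tsum_congr fun n => by rw [dd, pow_mul]
  have hEa : Ea a r = Real.pi/2 * SE := by
    rw [Ea, hSE]
    congr 1
    exact tsum_congr fun n => by rw [coefE, pow_mul]
  have hA := claimA ha0 ha1 ht0.le ht1
  have hB := claimB ha0 ha1 ht0.le ht1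
  rw [← hSK, ← hSE, ← hΦdef] at hA
  rw [← hSg, ← hΦdef] at hB
  -- the log part
  have hlogpart : Real.log (Real.exp (ramanujanR a / 2) / Real.sqrt (1 - t))
      = ramanujanR a / 2 - Real.log (1 - t) / 2 := by
    rw [Real.log_div (Real.exp_ne_zero _) (by
        rw [Real.sqrt_ne_zero']; exact h1t),
      Real.log_exp, Real.log_sqrt h1t.le]
  -- the fraction part
  have hfrac : (t * Real.sin (Real.pi * a)
      - 2 * (1 - a) * (Ea a r - (Real.sqrt (1 - t))^2 * Ka a r))
      / (2 * lam * t * (Real.sqrt (1 - t))^2 * Real.sin (Real.pi * a))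
      = Sγ / (2 * lam) := by
    rw [hsq, hEa, hKa, hsin]
    have hnum : t * (Real.pi * LL a)
        - 2 * (1 - a) * (Real.pi/2 * SE - (1 - t) * (Real.pi/2 * SK))
        = Real.pi * t * (LL a - a * (1-a) * Φ) := by
      have hSEe : SE = SK - t * SK + a * t * Φ := hA
      rw [hSEe]
      ring
    have hB' : LL a - a * (1-a) * Φ = LL a * ((1 - t) * Sγ) := by
      have : (1 - t) * Sγ = 1 - (a * (1-a) / LL a) * Φ := hB
      rw [this]
      field_simp
    rw [hnum, hB']
    field_simp
  -- HasSum side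
  have hγ : HasSum (fun k : ℕ => gam a k * t^k) Sγ := (summable_gamt ha0 ha1 ht0.le ht1).hasSum
  have hγ' : HasSum (fun k : ℕ => gam a (k+1) * t^(k+1)) (Sγ - gam a 0) := by
    apply (hasSum_nat_add_iff (f := fun k : ℕ => gam a k * t^k) 1).mpr
    simpa using hγ
  have habs : |t| < 1 := by rw [abs_of_pos ht0]; exact ht1
  have hlog : HasSum (fun k : ℕ => t^(k+1)/((k:ℝ)+1)) (-Real.log (1 - t)) := by
    exact_mod_cast hasSum_pow_div_log_of_abs_lt_one habs
  have hcomb := (hγ'.mul_left (1/(2*lam))).sub (hlog.mul_left (1/2))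
  have hterm : (fun k : ℕ => 1/(2*lam) * (gam a (k+1) * t^(k+1)) - 1/2 * (t^(k+1)/((k:ℝ)+1)))
      = fun k : ℕ => (gam a (k+1)/(2*lam) - 1/(2*((k:ℝ)+1))) * t^(k+1) := by
    funext k
    have hk : ((k:ℝ)+1) ≠ 0 := by positivity
    field_simp
  rw [hterm] at hcomb
  convert hcomb using 1
  case e'_3 => rfl
  rw [hlogpart, hfrac]
  ring

theorem stmt14 (a : ℝ) (ha : a ∈ Set.Ioc (0 : ℝ) (1/2)) (lam : ℝ) (hlam : 0 < lam)
    (hge : a * (1 - a) ≤ lam) :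
    StrictAntiOn (fun r : ℝ =>
      1/2 - Real.log (Real.exp (ramanujanR a / 2) / Real.sqrt (1 - r^2))
        + (r^2 * Real.sin (Real.pi * a)
            - 2 * (1 - a) * (Ea a r - (Real.sqrt (1 - r^2))^2 * Ka a r))
          / (2 * lam * r^2 * (Real.sqrt (1 - r^2))^2 * Real.sin (Real.pi * a)))
      (Set.Ioo 0 1) := by
  obtain ⟨ha0, ha12⟩ := ha
  have ha1 : a < 1 := by linarith
  intro r₁ hr₁ r₂ hr₂ hlt
  have h1 := value_repr ha0 ha1 hlam hr₁
  have h2 := value_repr ha0 ha1 hlam hr₂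
  have hdiff := h2.sub h1
  have hq : 0 < a * (1-a) := mul_pos ha0 (by linarith)
  -- each term of the difference is negative
  have hneg : ∀ k : ℕ,
      (gam a (k+1)/(2*lam) - 1/(2*((k:ℝ)+1))) * (r₂^2)^(k+1)
        - (gam a (k+1)/(2*lam) - 1/(2*((k:ℝ)+1))) * (r₁^2)^(k+1) < 0 := by
    intro k
    have hck : gam a (k+1)/(2*lam) - 1/(2*((k:ℝ)+1)) < 0 := by
      have hb := gam_bound ha0 ha1 k
      have h1' : gam a (k+1)/(2*lam) ≤ (a*(1-a)/((k:ℝ)+2))/(2*lam) := by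
        gcongr
      have h2' : (a*(1-a)/((k:ℝ)+2))/(2*lam) < 1/(2*((k:ℝ)+1)) := by
        rw [div_div, div_lt_div_iff₀ (by positivity) (by positivity)]
        have hk1 : (0:ℝ) < (k:ℝ)+1 := by positivity
        nlinarith [hq, hlam, hge]
      linarith
    have hpow : (r₁^2)^(k+1) < (r₂^2)^(k+1) := by
      apply pow_lt_pow_left₀ _ (by positivity)
      · omega
      · nlinarith [hr₁.1, hr₂.1, hlt]
    nlinarith [hck, hpow]
  have hzero : HasSum (fun _ : ℕ => (0:ℝ)) 0 := hasSum_zero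
  have hlt0 := hasSum_lt (f := fun k : ℕ =>
      (gam a (k+1)/(2*lam) - 1/(2*((k:ℝ)+1))) * (r₂^2)^(k+1)
        - (gam a (k+1)/(2*lam) - 1/(2*((k:ℝ)+1))) * (r₁^2)^(k+1))
      (g := fun _ : ℕ => (0:ℝ)) (i := 0)
      (fun k => (hneg k).le) (hneg 0) hdiff hzero
  simp only []
  linarith [hlt0]
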